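/- For all u, v ∈ ℝ^J, the Lorenz 96 bilinear map satisfies ‖B(u,v)‖ ≤ 2·‖u‖·‖v‖, where ‖·‖ is the Euclidean norm on ℝ^J. -/

import Mathlib

/-- The symmetric bilinear map of the Lorenz 96 model, with coordinates
indexed cyclically modulo `J`. -/
noncomputable def lorenz96B (J : ℕ) [NeZero J]
    (u v : EuclideanSpace ℝ (Fin J)) : EuclideanSpace ℝ (Fin J) :=
  WithLp.toLp 2 (fun j => (1 / 2) * (v (j - 1) * u (j + 1) + u (j - 1) * v (j + 1)
    - v (j - 2) * u (j - 1) - u (j - 2) * v (j - 1)))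

/-- View a function as an element of Euclidean space. -/
def l96v {J : ℕ} (f : Fin J → ℝ) : EuclideanSpace ℝ (Fin J) := WithLp.toLp 2 f

lemma l96_norm_comp_equiv {J : ℕ} (σ : Fin J ≃ Fin J)
    (u : EuclideanSpace ℝ (Fin J)) :
    ‖l96v (fun j => u (σ j))‖ = ‖u‖ := by
  simp only [EuclideanSpace.norm_eq]
  congr 1
  exact Fintype.sum_equiv σ (fun j => ‖u (σ j)‖ ^ 2) (fun i => ‖u i‖ ^ 2) (fun j => rfl)

lemma l96_norm_mul {J : ℕ} (w z : EuclideanSpace ℝ (Fin J)) :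
    ‖l96v (fun j => w j * z j)‖ ≤ ‖w‖ * ‖z‖ := by
  simp only [EuclideanSpace.norm_eq]
  rw [← Real.sqrt_mul (by positivity)]
  apply Real.sqrt_le_sqrt
  calc ∑ j, ‖l96v (fun j => w j * z j) j‖ ^ 2 = ∑ j, ‖w j‖ ^ 2 * ‖z j‖ ^ 2 := by
        simp [l96v, norm_mul, mul_pow]
    _ ≤ ∑ j, ‖w j‖ ^ 2 * (∑ k, ‖z k‖ ^ 2) := by
        apply Finset.sum_le_sum
        intro j _
        apply mul_le_mul_of_nonneg_left _ (by positivity)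
        exact Finset.single_le_sum (f := fun k => ‖z k‖ ^ 2)
          (fun k _ => by positivity) (Finset.mem_univ j)
    _ = (∑ j, ‖w j‖ ^ 2) * (∑ k, ‖z k‖ ^ 2) := by
        rw [← Finset.sum_mul]

theorem lorenz96B_norm_le (J : ℕ) [NeZero J] (hJ : 4 ≤ J)
    (u v : EuclideanSpace ℝ (Fin J)) :
    ‖lorenz96B J u v‖ ≤ 2 * ‖u‖ * ‖v‖ := by
  set a : EuclideanSpace ℝ (Fin J) := l96v (fun j => v (j - 1) * u (j + 1)) with ha
  set b : EuclideanSpace ℝ (Fin J) := l96v (fun j => u (j - 1) * v (j + 1)) with hb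
  set c : EuclideanSpace ℝ (Fin J) := l96v (fun j => v (j - 2) * u (j - 1)) with hc
  set d : EuclideanSpace ℝ (Fin J) := l96v (fun j => u (j - 2) * v (j - 1)) with hd
  have hB : lorenz96B J u v = (1 / 2 : ℝ) • (a + b - c - d) := by
    ext j
    simp [lorenz96B, ha, hb, hc, hd, l96v]
  have shiftu' : ∀ (t : Fin J), ‖l96v (fun j => u (j - t))‖ = ‖u‖ :=
    fun t => l96_norm_comp_equiv (Equiv.subRight t) u
  have shiftv' : ∀ (t : Fin J), ‖l96v (fun j => v (j - t))‖ = ‖v‖ :=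
    fun t => l96_norm_comp_equiv (Equiv.subRight t) v
  have shiftu : ∀ (t : Fin J), ‖l96v (fun j => u (j + t))‖ = ‖u‖ :=
    fun t => l96_norm_comp_equiv (Equiv.addRight t) u
  have shiftv : ∀ (t : Fin J), ‖l96v (fun j => v (j + t))‖ = ‖v‖ :=
    fun t => l96_norm_comp_equiv (Equiv.addRight t) v
  have hA : ‖a‖ ≤ ‖u‖ * ‖v‖ := by
    calc ‖a‖ ≤ ‖l96v (fun j => v (j - 1))‖ * ‖l96v (fun j => u (j + 1))‖ :=
        l96_norm_mul (l96v fun j => v (j - 1)) (l96v fun j => u (j + 1))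
      _ = ‖u‖ * ‖v‖ := by rw [shiftv' 1, shiftu 1, mul_comm]
  have hBb : ‖b‖ ≤ ‖u‖ * ‖v‖ := by
    calc ‖b‖ ≤ ‖l96v (fun j => u (j - 1))‖ * ‖l96v (fun j => v (j + 1))‖ :=
        l96_norm_mul (l96v fun j => u (j - 1)) (l96v fun j => v (j + 1))
      _ = ‖u‖ * ‖v‖ := by rw [shiftu' 1, shiftv 1]
  have hC : ‖c‖ ≤ ‖u‖ * ‖v‖ := by
    calc ‖c‖ ≤ ‖l96v (fun j => v (j - 2))‖ * ‖l96v (fun j => u (j - 1))‖ :=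
        l96_norm_mul (l96v fun j => v (j - 2)) (l96v fun j => u (j - 1))
      _ = ‖u‖ * ‖v‖ := by rw [shiftv' 2, shiftu' 1, mul_comm]
  have hD : ‖d‖ ≤ ‖u‖ * ‖v‖ := by
    calc ‖d‖ ≤ ‖l96v (fun j => u (j - 2))‖ * ‖l96v (fun j => v (j - 1))‖ :=
        l96_norm_mul (l96v fun j => u (j - 2)) (l96v fun j => v (j - 1))
      _ = ‖u‖ * ‖v‖ := by rw [shiftu' 2, shiftv' 1]
  rw [hB, norm_smul]
  have htri : ‖a + b - c - d‖ ≤ ‖a‖ + ‖b‖ + ‖c‖ + ‖d‖ := by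
    calc ‖a + b - c - d‖ ≤ ‖a + b - c‖ + ‖d‖ := norm_sub_le _ _
      _ ≤ ‖a + b‖ + ‖c‖ + ‖d‖ := by gcongr; exact norm_sub_le _ _
      _ ≤ ‖a‖ + ‖b‖ + ‖c‖ + ‖d‖ := by gcongr; exact norm_add_le _ _
  have h12 : ‖(1 / 2 : ℝ)‖ = 1 / 2 := by norm_num
  rw [h12]
  nlinarith [htri, hA, hBb, hC, hD, norm_nonneg (a + b - c - d)]
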